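/- Let A = (Q, Σ, δ, ρ) be a connected invertible reversible Mealy automaton that is not bireversible (equivalently, not coreversible). Let m ≥ 1, let T be a connected component of A^m and let L be a connected component of A^{m+1}, and assume that every word of L has its length-m suffix in T. Then |L| > |T|. (Equivalently: a 1-self-liftable path in the labeled orbit tree of A cannot contain an edge labeled by 1.) -/
import Mathlib


/-!
Mealy automata: common definitions.

A Mealy automaton on stateset `Q` and alphabet `Γ` is given by transition
functions `δ : Γ → Q → Q` (for each input letter) and output functions
`ρ : Q → Γ → Γ` (for each state); it has a transition `x —i|j→ y` exactly
when `δ i x = y` and `ρ x i = j`.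
-/

/-- Extended output function `ρ_x : Γ* → Γ*` of a single state. -/
def rhoStar {Q Γ : Type*} (δ : Γ → Q → Q) (ρ : Q → Γ → Γ) : Q → List Γ → List Γ
  | _, [] => []
  | x, i :: s => ρ x i :: rhoStar δ ρ (δ i x) s

/-- `ρ_u : Γ* → Γ*` for a word `u = x₁⋯x_n` of states: `ρ_u = ρ_{x_n} ∘ ⋯ ∘ ρ_{x₁}`. -/
def rhoWord {Q Γ : Type*} (δ : Γ → Q → Q) (ρ : Q → Γ → Γ) : List Q → List Γ → List Γ
  | [], s => s
  | x :: u, s => rhoWord δ ρ u (rhoStar δ ρ x s)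

/-- `ρ_u : Γ → Γ` on single letters (the output function of the power automaton). -/
def rhoLetter {Q Γ : Type*} (ρ : Q → Γ → Γ) : List Q → Γ → Γ
  | [], i => i
  | x :: u, i => rhoLetter ρ u (ρ x i)

/-- Extended transition function `δ_i : Q* → Q*` (the transition function of powers). -/
def deltaStar {Q Γ : Type*} (δ : Γ → Q → Q) (ρ : Q → Γ → Γ) : Γ → List Q → List Q
  | _, [] => []
  | i, x :: u => δ i x :: deltaStar δ ρ (ρ x i) u

/-- Sequential application `δ_s = δ_{s_n} ∘ ⋯ ∘ δ_{s₁}` of the letters of a word `s`. -/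
def applyWord {S Γ : Type*} (d : Γ → S → S) : List Γ → S → S
  | [], x => x
  | i :: s, x => applyWord d s (d i x)

/-- The orbit `{δ_s(x) : s ∈ Γ*}` of a state: for reversible automata this is
exactly the (strongly) connected component of `x`. -/
def orbitOf {S Γ : Type*} (d : Γ → S → S) (x : S) : Set S :=
  {y | ∃ s : List Γ, applyWord d s x = y}

/-- An automaton is invertible when every output function is a permutation. -/
def MInvertible {Q Γ : Type*} (ρ : Q → Γ → Γ) : Prop := ∀ x, Function.Bijective (ρ x)

/-- An automaton is reversible when every transition function is a permutation. -/
def MReversible {Q Γ : Type*} (δ : Γ → Q → Q) : Prop := ∀ i, Function.Bijective (δ i)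

/-- Coreversibility: `δ_i(y) = δ_{i'}(z)` and `ρ_y(i) = ρ_z(i')` imply `y = z`. -/
def MCoreversible {Q Γ : Type*} (δ : Γ → Q → Q) (ρ : Q → Γ → Γ) : Prop :=
  ∀ y z : Q, ∀ i i' : Γ, δ i y = δ i' z → ρ y i = ρ z i' → y = z

/-- Bireversible: invertible, reversible and coreversible. -/
def MBireversible {Q Γ : Type*} (δ : Γ → Q → Q) (ρ : Q → Γ → Γ) : Prop :=
  MInvertible ρ ∧ MReversible δ ∧ MCoreversible δ ρ

/-- Connectedness: every state is reachable from every state. -/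
def MConnected {Q Γ : Type*} (δ : Γ → Q → Q) : Prop :=
  ∀ x y : Q, ∃ s : List Γ, applyWord δ s x = y

/-- Invertibility of a component `C` (as an automaton with stateset `C`). -/
def CompInvertible {S Γ : Type*} (r : S → Γ → Γ) (C : Set S) : Prop :=
  ∀ x ∈ C, Function.Bijective (r x)

/-- Reversibility of a component `C`: each transition function permutes `C`. -/
def CompReversible {S Γ : Type*} (d : Γ → S → S) (C : Set S) : Prop :=
  ∀ i : Γ, Set.BijOn (d i) C C

/-- Coreversibility of a component `C` (as an automaton with stateset `C`). -/
def CompCoreversible {S Γ : Type*} (d : Γ → S → S) (r : S → Γ → Γ) (C : Set S) : Prop :=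
  ∀ y ∈ C, ∀ z ∈ C, ∀ i i' : Γ, d i y = d i' z → r y i = r z i' → y = z

/-- Bireversibility of a component `C` (as an automaton with stateset `C`). -/
def CompBireversible {S Γ : Type*} (d : Γ → S → S) (r : S → Γ → Γ) (C : Set S) : Prop :=
  CompInvertible r C ∧ CompReversible d C ∧ CompCoreversible d r C

/-- Transition functions of the product `A × B` of two Mealy automata. -/
def prodD {Q Q' Γ : Type*} (δ : Γ → Q → Q) (ρ : Q → Γ → Γ) (δ' : Γ → Q' → Q') :
    Γ → Q × Q' → Q × Q' :=
  fun i p => (δ i p.1, δ' (ρ p.1 i) p.2)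

/-- Output functions of the product `A × B` of two Mealy automata. -/
def prodR {Q Q' Γ : Type*} (ρ : Q → Γ → Γ) (ρ' : Q' → Γ → Γ) : Q × Q' → Γ → Γ :=
  fun p i => ρ' p.2 (ρ p.1 i)

/-- `u^n`: the `n`-fold concatenation of a word with itself. -/
def wordPow {Q : Type*} (u : List Q) : ℕ → List Q
  | 0 => []
  | n + 1 => u ++ wordPow u n

section MealyAux

open Set

variable {Q Γ : Type*} {δ : Γ → Q → Q} {ρ : Q → Γ → Γ}

lemma applyWord_append' {S Γ : Type*} (d : Γ → S → S) (s s' : List Γ) (x : S) :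
    applyWord d (s ++ s') x = applyWord d s' (applyWord d s x) := by
  induction s generalizing x with
  | nil => rfl
  | cons i s ih => simp [applyWord, ih]

lemma deltaStar_length (i : Γ) (w : List Q) :
    (deltaStar δ ρ i w).length = w.length := by
  induction w generalizing i with
  | nil => rfl
  | cons x u ih => simp [deltaStar, ih]

lemma applyWord_deltaStar_length (s : List Γ) (w : List Q) :
    (applyWord (deltaStar δ ρ) s w).length = w.length := by
  induction s generalizing w with
  | nil => rfl
  | cons i s ih => simp [applyWord, ih, deltaStar_length]

lemma deltaStar_inj (hRev : MReversible δ) :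
    ∀ (w w' : List Q) (i : Γ), deltaStar δ ρ i w = deltaStar δ ρ i w' → w = w' := by
  intro w
  induction w with
  | nil =>
    intro w' i h
    cases w' with
    | nil => rfl
    | cons y v => simp [deltaStar] at h
  | cons x u ih =>
    intro w' i h
    cases w' with
    | nil => simp [deltaStar] at h
    | cons y v =>
      simp only [deltaStar, List.cons.injEq] at h
      obtain ⟨h1, h2⟩ := h
      have hxy : x = y := (hRev i).1 h1
      subst hxy
      exact congrArg (x :: ·) (ih v (ρ x i) h2)

lemma applyWord_replicate_eq_iterate (d : Γ → Q → Q) (i : Γ) :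
    ∀ (k : ℕ) (x : Q), applyWord d (List.replicate k i) x = (d i)^[k] x := by
  intro k
  induction k with
  | zero => intro x; rfl
  | succ k ih =>
    intro x
    rw [List.replicate_succ]
    show applyWord d (List.replicate k i) (d i x) = (d i)^[k+1] x
    rw [ih, Function.iterate_succ_apply]

lemma exists_replicate_ret [Fintype Q] (hRev : MReversible δ) (i : Γ) (w : List Q) :
    ∃ k : ℕ, applyWord (deltaStar δ ρ) (List.replicate k i) (deltaStar δ ρ i w) = w := by
  classical
  set f : List Q → List Q := deltaStar δ ρ i with hf
  have hinj : Function.Injective f := fun a b h => deltaStar_inj hRev a b i h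
  have hlen : ∀ n : ℕ, (f^[n] w).length = w.length := by
    intro n
    induction n with
    | zero => rfl
    | succ n ihn => rw [Function.iterate_succ_apply', hf, deltaStar_length]; exact ihn
  have hfin : ({l : List Q | l.length = w.length}).Finite := List.finite_length_eq Q w.length
  haveI : Finite {l : List Q // l.length = w.length} := hfin.to_subtype
  set g : ℕ → {l : List Q // l.length = w.length} := fun n => ⟨f^[n] w, hlen n⟩ with hg
  obtain ⟨a, b, hab, heq⟩ := Finite.exists_ne_map_eq_of_infinite g
  wlog hlt : a < b generalizing a b
  · exact this b a hab.symm heq.symm (by omega)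
  have h1 : f^[a] w = f^[b] w := congrArg Subtype.val heq
  obtain ⟨c, rfl⟩ : ∃ c, b = a + c := ⟨b - a, by omega⟩
  have hc : 0 < c := by omega
  rw [Function.iterate_add_apply] at h1
  have h2 : w = f^[c] w := (hinj.iterate a) h1
  obtain ⟨k, rfl⟩ : ∃ k, c = k + 1 := ⟨c - 1, by omega⟩
  refine ⟨k, ?_⟩
  rw [applyWord_replicate_eq_iterate, ← Function.iterate_succ_apply]
  exact h2.symm

lemma orbit_trans {S Γ : Type*} {d : Γ → S → S} {x y z : S}
    (hy : y ∈ orbitOf d x) (hz : z ∈ orbitOf d y) : z ∈ orbitOf d x := by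
  obtain ⟨s, rfl⟩ := hy
  obtain ⟨s', rfl⟩ := hz
  exact ⟨s ++ s', applyWord_append' d s s' x⟩

lemma orbit_symm [Fintype Q] (hRev : MReversible δ) :
    ∀ (s : List Γ) (w : List Q), w ∈ orbitOf (deltaStar δ ρ) (applyWord (deltaStar δ ρ) s w) := by
  intro s
  induction s with
  | nil => intro w; exact ⟨[], rfl⟩
  | cons i s ih =>
    intro w
    have h1 : deltaStar δ ρ i w ∈
        orbitOf (deltaStar δ ρ) (applyWord (deltaStar δ ρ) (i :: s) w) := ih (deltaStar δ ρ i w)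
    obtain ⟨k, hk⟩ := exists_replicate_ret (ρ := ρ) hRev i w
    exact orbit_trans h1 ⟨List.replicate k i, hk⟩

lemma orbit_eq [Fintype Q] (hRev : MReversible δ) {w x : List Q}
    (hw : w ∈ orbitOf (deltaStar δ ρ) x) :
    orbitOf (deltaStar δ ρ) w = orbitOf (deltaStar δ ρ) x := by
  obtain ⟨s, rfl⟩ := hw
  apply Set.eq_of_subset_of_subset
  · intro z hz
    exact orbit_trans ⟨s, rfl⟩ hz
  · intro z hz
    exact orbit_trans (orbit_symm hRev s x) hz

lemma replicate_comm (d : Γ → Q → Q) (j : Γ) :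
    ∀ (k : ℕ) (w : Q), d j (applyWord d (List.replicate k j) w)
      = applyWord d (List.replicate k j) (d j w) := by
  intro k
  induction k with
  | zero => intro w; rfl
  | succ k ih =>
    intro w
    rw [List.replicate_succ]
    show d j (applyWord d (List.replicate k j) (d j w))
      = applyWord d (List.replicate k j) (d j (d j w))
    exact ih (d j w)

lemma orbit_rev_step [Fintype Q] (hRev : MReversible δ) {w x : List Q}
    (hw : w ∈ orbitOf (deltaStar δ ρ) x) (j : Γ) :
    ∃ w' ∈ orbitOf (deltaStar δ ρ) x, deltaStar δ ρ j w' = w := by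
  obtain ⟨k, hk⟩ := exists_replicate_ret (ρ := ρ) hRev j w
  refine ⟨applyWord (deltaStar δ ρ) (List.replicate k j) w,
    orbit_trans hw ⟨List.replicate k j, rfl⟩, ?_⟩
  exact (replicate_comm (deltaStar δ ρ) j k w).trans hk

lemma applyWord_cons_head (δ : Γ → Q → Q) (ρ : Q → Γ → Γ) :
    ∀ (s : List Γ) (x : Q) (u : List Q),
      ∃ u', applyWord (deltaStar δ ρ) s (x :: u) = applyWord δ s x :: u' := by
  intro s
  induction s with
  | nil => exact fun x u => ⟨u, rfl⟩
  | cons i s ih =>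
    intro x u
    obtain ⟨u', hu'⟩ := ih (δ i x) (deltaStar δ ρ (ρ x i) u)
    exact ⟨u', hu'⟩

lemma exists_lift (hInv : MInvertible ρ) :
    ∀ (s : List Γ) (u : List Q) (x : Q),
      ∃ (s' : List Γ) (y : Q), applyWord (deltaStar δ ρ) s' (x :: u)
        = y :: applyWord (deltaStar δ ρ) s u := by
  intro s
  induction s with
  | nil => exact fun u x => ⟨[], x, rfl⟩
  | cons j s ih =>
    intro u x
    obtain ⟨i, hi⟩ := (hInv x).2 j
    obtain ⟨s', y, hs'⟩ := ih (deltaStar δ ρ j u) (δ i x)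
    refine ⟨i :: s', y, ?_⟩
    show applyWord (deltaStar δ ρ) s' (deltaStar δ ρ i (x :: u)) = _
    rw [show deltaStar δ ρ i (x :: u) = δ i x :: deltaStar δ ρ (ρ x i) u from rfl, hi, hs']
    rfl

lemma bad_pair [Finite Q] [Finite Γ] (δ : Γ → Q → Q) (ρ : Q → Γ → Γ)
    (h : ¬ MCoreversible δ ρ) :
    ∃ (w : Q) (j : Γ), ∀ (y : Q) (i : Γ), ¬ (δ i y = w ∧ ρ y i = j) := by
  unfold MCoreversible at h
  push_neg at h
  obtain ⟨y, z, i, i', h1, h2, hne⟩ := h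
  set F : Q × Γ → Q × Γ := fun p => (δ p.2 p.1, ρ p.1 p.2) with hF
  have hFni : ¬ Function.Injective F := by
    intro hinj
    have : (y, i) = (z, i') := hinj (by simp [hF, h1, h2])
    exact hne (congrArg Prod.fst this)
  have hFns : ¬ Function.Surjective F := fun hs => hFni (Finite.injective_iff_surjective.2 hs)
  unfold Function.Surjective at hFns
  push_neg at hFns
  obtain ⟨⟨w, j⟩, hw⟩ := hFns
  refine ⟨w, j, fun y0 i0 hc => hw (y0, i0) ?_⟩
  simp [hF, hc.1, hc.2]

end MealyAux

/-- In a connected invertible reversible non-bireversible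
Mealy automaton, along a 1-self-liftable edge of the orbit tree the component
strictly grows: if `T` is the component of a word `u0` of length `m ≥ 1`,
`L` is the component of a word `v0` of length `m + 1`, and every word of `L`
has its length-`m` suffix in `T`, then `|T| < |L|`. -/
theorem no_label_one_on_self_liftable_path
    {Q Γ : Type*} [Fintype Q] [Fintype Γ] [Nonempty Q] [Nonempty Γ]
    (δ : Γ → Q → Q) (ρ : Q → Γ → Γ)
    (hConn : MConnected δ) (hInv : MInvertible ρ) (hRev : MReversible δ)
    (hNotBir : ¬ MBireversible δ ρ)
    (m : ℕ) (hm : 1 ≤ m) (u0 v0 : List Q)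
    (hu0 : u0.length = m) (hv0 : v0.length = m + 1)
    (hlift : ∀ w ∈ orbitOf (deltaStar δ ρ) v0,
      w.drop 1 ∈ orbitOf (deltaStar δ ρ) u0) :
    (orbitOf (deltaStar δ ρ) u0).ncard < (orbitOf (deltaStar δ ρ) v0).ncard := by
  classical
  have hv0ne : v0 ≠ [] := by intro h; rw [h] at hv0; simp at hv0
  obtain ⟨x, u, rfl⟩ := List.exists_cons_of_ne_nil hv0ne
  have hv0mem : (x :: u) ∈ orbitOf (deltaStar δ ρ) (x :: u) := ⟨[], rfl⟩
  have humem : u ∈ orbitOf (deltaStar δ ρ) u0 := by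
    simpa using hlift (x :: u) hv0mem
  have hLfin : (orbitOf (deltaStar δ ρ) (x :: u)).Finite := by
    apply (List.finite_length_eq Q (m + 1)).subset
    rintro w ⟨s, rfl⟩
    simp only [Set.mem_setOf_eq, applyWord_deltaStar_length]
    exact hv0
  have hsurj : ∀ t ∈ orbitOf (deltaStar δ ρ) u0,
      ∃ w ∈ orbitOf (deltaStar δ ρ) (x :: u), w.drop 1 = t := by
    intro t ht
    have ht' : t ∈ orbitOf (deltaStar δ ρ) u := by
      rw [orbit_eq hRev humem]; exact ht
    obtain ⟨s, rfl⟩ := ht'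
    obtain ⟨s', y, hs'⟩ := exists_lift hInv s u x
    exact ⟨y :: applyWord (deltaStar δ ρ) s u, ⟨s', hs'⟩, rfl⟩
  have himg : orbitOf (deltaStar δ ρ) u0
      ⊆ (List.drop 1) '' (orbitOf (deltaStar δ ρ) (x :: u)) := by
    intro t ht
    obtain ⟨w, hw, hwt⟩ := hsurj t ht
    exact ⟨w, hw, hwt⟩
  have hle : (orbitOf (deltaStar δ ρ) u0).ncard
      ≤ (orbitOf (deltaStar δ ρ) (x :: u)).ncard :=
    le_trans (Set.ncard_le_ncard himg (hLfin.image _)) (Set.ncard_image_le hLfin)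
  rcases lt_or_eq_of_le hle with h | heq
  · exact h
  exfalso
  have hcon : (orbitOf (deltaStar δ ρ) (x :: u)).ncard
      ≤ (orbitOf (deltaStar δ ρ) u0).ncard := le_of_eq heq.symm
  have hinj : ∀ ⦃a⦄, a ∈ orbitOf (deltaStar δ ρ) (x :: u) →
      ∀ ⦃b⦄, b ∈ orbitOf (deltaStar δ ρ) (x :: u) → a.drop 1 = b.drop 1 → a = b := by
    intro a ha b hb hab
    exact Set.inj_on_of_surj_on_of_ncard_le (fun w _ => w.drop 1)
      (fun w hw => hlift w hw)
      (fun t ht => by obtain ⟨w, hw, hwt⟩ := hsurj t ht; exact ⟨w, hw, hwt⟩)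
      hcon ha hb hab hLfin
  have hnotco : ¬ MCoreversible δ ρ := fun hc => hNotBir ⟨hInv, hRev, hc⟩
  obtain ⟨w, j, hbad⟩ := bad_pair δ ρ hnotco
  obtain ⟨s, hs⟩ := hConn x w
  obtain ⟨u', hu'⟩ := applyWord_cons_head δ ρ s x u
  have hvL : (w :: u') ∈ orbitOf (deltaStar δ ρ) (x :: u) := ⟨s, by rw [hu', hs]⟩
  have htT : u' ∈ orbitOf (deltaStar δ ρ) u0 := by
    simpa using hlift (w :: u') hvL
  obtain ⟨t', ht'T, ht'⟩ := orbit_rev_step hRev htT j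
  obtain ⟨v', hv'L, hv't⟩ := hsurj t' ht'T
  have hv'len : v'.length = m + 1 := by
    obtain ⟨sv, rfl⟩ := hv'L
    rw [applyWord_deltaStar_length]; exact hv0
  have hv'ne : v' ≠ [] := by
    intro h; rw [h] at hv'len; simp at hv'len
  obtain ⟨b, t'', rfl⟩ := List.exists_cons_of_ne_nil hv'ne
  have htail : t'' = t' := by simpa using hv't
  subst htail
  obtain ⟨i, hi⟩ := (hInv b).2 j
  have hstep : deltaStar δ ρ i (b :: t'') = δ i b :: u' := by
    show δ i b :: deltaStar δ ρ (ρ b i) t'' = _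
    rw [hi, ht']
  have hmemL : (δ i b :: u') ∈ orbitOf (deltaStar δ ρ) (x :: u) := by
    obtain ⟨sv, hsv⟩ := hv'L
    refine ⟨sv ++ [i], ?_⟩
    rw [applyWord_append' _ sv [i], hsv]
    exact hstep
  have hfinal : δ i b :: u' = w :: u' := hinj hmemL hvL rfl
  have hw' : δ i b = w := by injection hfinal
  exact hbad b i ⟨hw', hi⟩
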